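/- If l < 0 < u, then the convex hull of the graph G(l,u) = {(s,z) ∈ ℝ² : z = max(0,s), l ≤ s ≤ u} equals the set of (s,z) satisfying l ≤ s ≤ u, z ≥ 0, z ≥ s, and z ≤ (u/(u−l))·(s−l). -/

import Mathlib

theorem relu_hull_description (l u : ℝ) (hl : l < 0) (hu : 0 < u) :
    convexHull ℝ {p : ℝ × ℝ | p.2 = max 0 p.1 ∧ l ≤ p.1 ∧ p.1 ≤ u} =
      {p : ℝ × ℝ | l ≤ p.1 ∧ p.1 ≤ u ∧ 0 ≤ p.2 ∧ p.1 ≤ p.2 ∧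
        p.2 ≤ u / (u - l) * (p.1 - l)} := by
  have hul : (0:ℝ) < u - l := by linarith
  have hk : 0 < u / (u - l) := div_pos hu hul
  apply le_antisymm
  · -- hull ⊆ triangle
    apply convexHull_min
    · rintro ⟨s, z⟩ ⟨hz, hls, hsu⟩
      simp only [Set.mem_setOf_eq] at *
      rcases le_total s 0 with h | h
      · have hz0 : z = 0 := by rw [hz, max_eq_left h]
        subst hz0
        exact ⟨hls, hsu, le_refl _, h, mul_nonneg hk.le (by linarith)⟩
      · have hz0 : z = s := by rw [hz, max_eq_right h]
        subst hz0
        refine ⟨hls, hsu, h, le_refl _, ?_⟩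
        rw [div_mul_eq_mul_div, le_div_iff₀ hul]
        nlinarith
    · -- convexity of the triangle
      rintro ⟨s₁, z₁⟩ ⟨h1, h2, h3, h4, h5⟩ ⟨s₂, z₂⟩ ⟨g1, g2, g3, g4, g5⟩ a b ha hb hab
      simp only [Set.mem_setOf_eq, Prod.smul_mk, Prod.mk_add_mk, smul_eq_mul] at *
      refine ⟨by nlinarith, by nlinarith, by nlinarith, by nlinarith, ?_⟩
      have e1 : a * z₁ ≤ a * (u / (u - l) * (s₁ - l)) :=
        mul_le_mul_of_nonneg_left h5 ha
      have e2 : b * z₂ ≤ b * (u / (u - l) * (s₂ - l)) :=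
        mul_le_mul_of_nonneg_left g5 hb
      calc a * z₁ + b * z₂ ≤ a * (u / (u - l) * (s₁ - l)) + b * (u / (u - l) * (s₂ - l)) :=
            add_le_add e1 e2
        _ = u / (u - l) * (a * s₁ + b * s₂ - (a + b) * l) := by ring
        _ = u / (u - l) * (a * s₁ + b * s₂ - l) := by rw [hab, one_mul]
  · -- triangle ⊆ hull
    rintro ⟨s, z⟩ ⟨h1, h2, h3, h4, h5⟩
    simp only [Set.mem_setOf_eq] at *
    have hA : ((l, 0) : ℝ × ℝ) ∈ {p : ℝ × ℝ | p.2 = max 0 p.1 ∧ l ≤ p.1 ∧ p.1 ≤ u} := by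
      refine ⟨?_, le_refl _, le_of_lt (lt_trans hl hu)⟩
      simp [max_eq_left hl.le]
    have hB : ((0, 0) : ℝ × ℝ) ∈ {p : ℝ × ℝ | p.2 = max 0 p.1 ∧ l ≤ p.1 ∧ p.1 ≤ u} := by
      exact ⟨by simp, hl.le, hu.le⟩
    have hC : ((u, u) : ℝ × ℝ) ∈ {p : ℝ × ℝ | p.2 = max 0 p.1 ∧ l ≤ p.1 ∧ p.1 ≤ u} := by
      exact ⟨by simp [max_eq_right hu.le], le_of_lt (lt_trans hl hu), le_refl _⟩
    -- weights
    set a : ℝ := (z - s) / (-l) with ha_def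
    set c : ℝ := z / u with hc_def
    set b : ℝ := 1 - a - c with hb_def
    have hnl : (0:ℝ) < -l := by linarith
    have haa : 0 ≤ a := div_nonneg (by linarith) hnl.le
    have hcc : 0 ≤ c := div_nonneg h3 hu.le
    have hbb : 0 ≤ b := by
      rw [hb_def, ha_def, hc_def]
      rw [sub_nonneg] at *
      have key : (z - s) / (-l) + z / u ≤ 1 := by
        rw [div_add_div _ _ (ne_of_gt hnl) (ne_of_gt hu), div_le_one (by positivity)]
        have h5' : z * (u - l) ≤ u * (s - l) := by
          rw [div_mul_eq_mul_div, le_div_iff₀ hul] at h5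
          linarith
        nlinarith
      linarith
    have hsum : a + b + c = 1 := by rw [hb_def]; ring
    have hcomb : (s, z) = a • ((l,0) : ℝ × ℝ) + b • ((0,0) : ℝ × ℝ) + c • ((u,u) : ℝ × ℝ) := by
      simp only [Prod.smul_mk, Prod.mk_add_mk, smul_eq_mul, Prod.mk.injEq]
      constructor
      · rw [ha_def, hc_def]; field_simp; rw [mul_div_cancel_right₀ _ hl.ne]; ring
      · rw [hc_def]; field_simp; ring
    rw [hcomb]
    have hmem : ∀ p ∈ ({(l,0), (0,0), (u,u)} : Set (ℝ × ℝ)),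
        p ∈ convexHull ℝ {p : ℝ × ℝ | p.2 = max 0 p.1 ∧ l ≤ p.1 ∧ p.1 ≤ u} := by
      rintro p (rfl | rfl | rfl)
      · exact subset_convexHull ℝ _ hA
      · exact subset_convexHull ℝ _ hB
      · exact subset_convexHull ℝ _ hC
    have hfin : a • ((l,0) : ℝ × ℝ) + b • ((0,0) : ℝ × ℝ) + c • ((u,u) : ℝ × ℝ)
        = ∑ i : Fin 3, ![a, b, c] i • ![((l,0) : ℝ × ℝ), (0,0), (u,u)] i := by
      simp [Fin.sum_univ_three]
    rw [hfin]
    apply (convex_convexHull ℝ _).sum_mem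
    · intro i _
      fin_cases i <;> simpa using (by assumption : _)
    · simp [Fin.sum_univ_three]; linarith
    · intro i _
      fin_cases i <;> simp <;> [exact subset_convexHull ℝ _ hA; exact subset_convexHull ℝ _ hB; exact subset_convexHull ℝ _ hC]
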